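/- Let K : X × X → ℝ be a symmetric positive semidefinite kernel, let X^b = (x_1,…,x_n) be points with K(X^b,X^b) invertible and Y^b ∈ ℝ^n, and let X^c be a sub-tuple of X^b with K(X^c,X^c) invertible and Y^c the corresponding sub-vector of Y^b. Then Y^{c,ᵀ} (K(X^c,X^c))^{-1} Y^c ≤ Y^{b,ᵀ} (K(X^b,X^b))^{-1} Y^b. Consequently, the Kernel Flows loss ρ = 1 − (Y^{c,ᵀ}(K(X^c,X^c))^{-1}Y^c)/(Y^{b,ᵀ}(K(X^b,X^b))^{-1}Y^b) satisfies 0 ≤ ρ ≤ 1 whenever Y^b ≠ 0. -/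

import Mathlib

open Matrix

private lemma KF_psd {m : ℕ} {M : Matrix (Fin m) (Fin m) ℝ}
    (hsym : Mᵀ = M) (hpos : ∀ x : Fin m → ℝ, 0 ≤ x ⬝ᵥ (M *ᵥ x)) :
    M.PosSemidef := by
  refine (Matrix.posSemidef_iff_dotProduct_mulVec).mpr ⟨?_, fun x => by simpa using hpos x⟩
  ext i j
  simp only [Matrix.conjTranspose_apply, star_trivial]
  exact congrFun (congrFun hsym i) j

private lemma KF_var {m : ℕ} {M : Matrix (Fin m) (Fin m) ℝ}
    (hsym : Mᵀ = M) (hpos : ∀ x : Fin m → ℝ, 0 ≤ x ⬝ᵥ (M *ᵥ x))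
    (h : IsUnit M.det) (Y c : Fin m → ℝ) :
    2 * (c ⬝ᵥ Y) - c ⬝ᵥ (M *ᵥ c) ≤ Y ⬝ᵥ (M⁻¹ *ᵥ Y) := by
  set v := M⁻¹ *ᵥ Y with hv
  have hMv : M *ᵥ v = Y := by
    rw [hv, Matrix.mulVec_mulVec, Matrix.mul_nonsing_inv _ h, Matrix.one_mulVec]
  have h0 : 0 ≤ (c - v) ⬝ᵥ (M *ᵥ (c - v)) := hpos _
  have hvMc : v ⬝ᵥ (M *ᵥ c) = Y ⬝ᵥ c := by
    rw [Matrix.dotProduct_mulVec, ← Matrix.mulVec_transpose, hsym, hMv]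
  have expand : (c - v) ⬝ᵥ (M *ᵥ (c - v))
      = c ⬝ᵥ (M *ᵥ c) - c ⬝ᵥ Y - (Y ⬝ᵥ c) + Y ⬝ᵥ v := by
    rw [Matrix.mulVec_sub, hMv, sub_dotProduct, dotProduct_sub,
      dotProduct_sub, hvMc, dotProduct_comm v Y]
    ring
  have hcY : Y ⬝ᵥ c = c ⬝ᵥ Y := dotProduct_comm _ _
  rw [expand, hcY] at h0
  linarith

theorem kernel_flows_rho_bounds {X : Type*} (K : X → X → ℝ)
    (hsymm : ∀ x y, K x y = K y x)
    (hpsd : ∀ (q : ℕ) (z : Fin q → X) (c : Fin q → ℝ),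
      0 ≤ ∑ i, ∑ j, c i * c j * K (z i) (z j))
    (n p : ℕ) (xs : Fin n → X) (Yb : Fin n → ℝ)
    (ι : Fin p → Fin n) (hι : Function.Injective ι)
    (Yc : Fin p → ℝ) (hYc : ∀ j, Yc j = Yb (ι j))
    (Kb : Matrix (Fin n) (Fin n) ℝ)
    (hKb : Kb = Matrix.of fun i j => K (xs i) (xs j))
    (hKbinv : IsUnit Kb.det)
    (Kc : Matrix (Fin p) (Fin p) ℝ)
    (hKc : Kc = Matrix.of fun i j => K (xs (ι i)) (xs (ι j)))
    (hKcinv : IsUnit Kc.det) :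
    Yc ⬝ᵥ (Kc⁻¹ *ᵥ Yc) ≤ Yb ⬝ᵥ (Kb⁻¹ *ᵥ Yb) ∧
    (Yb ≠ 0 →
      0 ≤ 1 - (Yc ⬝ᵥ (Kc⁻¹ *ᵥ Yc)) / (Yb ⬝ᵥ (Kb⁻¹ *ᵥ Yb)) ∧
      1 - (Yc ⬝ᵥ (Kc⁻¹ *ᵥ Yc)) / (Yb ⬝ᵥ (Kb⁻¹ *ᵥ Yb)) ≤ 1) := by
  -- Symmetry and positivity of Kb, Kc
  have hKbsym : Kbᵀ = Kb := by
    subst hKb; ext i j; simp [Matrix.transpose_apply, hsymm]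
  have hKcsym : Kcᵀ = Kc := by
    subst hKc; ext i j; simp [Matrix.transpose_apply, hsymm]
  have hKbpos : ∀ x : Fin n → ℝ, 0 ≤ x ⬝ᵥ (Kb *ᵥ x) := by
    intro x
    have := hpsd n xs x
    subst hKb
    simpa [dotProduct, Matrix.mulVec, Finset.mul_sum, mul_assoc, mul_comm, mul_left_comm] using this
  have hKcpos : ∀ x : Fin p → ℝ, 0 ≤ x ⬝ᵥ (Kc *ᵥ x) := by
    intro x
    have := hpsd p (xs ∘ ι) x
    subst hKc
    simpa [dotProduct, Matrix.mulVec, Finset.mul_sum, mul_assoc, mul_comm, mul_left_comm] using this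
  -- key inequality
  set a := Kc⁻¹ *ᵥ Yc with ha
  have hKca : Kc *ᵥ a = Yc := by
    rw [ha, Matrix.mulVec_mulVec, Matrix.mul_nonsing_inv _ hKcinv, Matrix.one_mulVec]
  -- selection matrix
  set P : Matrix (Fin n) (Fin p) ℝ := Matrix.of (fun i j => if ι j = i then 1 else 0) with hP
  have hPY : Pᵀ *ᵥ Yb = Yc := by
    ext j
    simp [hP, Matrix.mulVec, dotProduct, hYc, Finset.sum_ite_eq]
  have hPKP : Pᵀ * Kb * P = Kc := by
    ext i j
    subst hKb hKc
    simp [hP, Matrix.mul_apply, Finset.sum_ite_eq, ite_mul, mul_ite]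
  -- the extension vector
  set c : Fin n → ℝ := P *ᵥ a with hc
  have hswap : ∀ w : Fin n → ℝ, c ⬝ᵥ w = a ⬝ᵥ (Pᵀ *ᵥ w) := by
    intro w
    rw [hc, dotProduct_comm, Matrix.dotProduct_mulVec, ← Matrix.mulVec_transpose,
      dotProduct_comm]
  have hcY : c ⬝ᵥ Yb = a ⬝ᵥ Yc := by rw [hswap, hPY]
  have hcKc : c ⬝ᵥ (Kb *ᵥ c) = a ⬝ᵥ Yc := by
    rw [hswap, hc, Matrix.mulVec_mulVec, Matrix.mulVec_mulVec, hPKP, hKca]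
  have haYc : a ⬝ᵥ Yc = Yc ⬝ᵥ (Kc⁻¹ *ᵥ Yc) := by
    rw [ha, dotProduct_comm]
  have key : Yc ⬝ᵥ (Kc⁻¹ *ᵥ Yc) ≤ Yb ⬝ᵥ (Kb⁻¹ *ᵥ Yb) := by
    have := KF_var hKbsym hKbpos hKbinv Yb c
    rw [hcY, hcKc, haYc] at this
    linarith
  refine ⟨key, fun hYb => ?_⟩
  -- nonnegativity of A
  have hApos : 0 ≤ Yc ⬝ᵥ (Kc⁻¹ *ᵥ Yc) := by
    have h1 : Yc ⬝ᵥ (Kc⁻¹ *ᵥ Yc) = a ⬝ᵥ (Kc *ᵥ a) := by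
      rw [hKca, ← haYc]
    rw [h1]; exact hKcpos a
  -- strict positivity of B
  set b := Kb⁻¹ *ᵥ Yb with hb
  have hKbb : Kb *ᵥ b = Yb := by
    rw [hb, Matrix.mulVec_mulVec, Matrix.mul_nonsing_inv _ hKbinv, Matrix.one_mulVec]
  have hBeq : Yb ⬝ᵥ (Kb⁻¹ *ᵥ Yb) = b ⬝ᵥ (Kb *ᵥ b) := by
    rw [hKbb, ← hb, dotProduct_comm]
  have hBpos : 0 < Yb ⬝ᵥ (Kb⁻¹ *ᵥ Yb) := by
    rcases lt_or_eq_of_le (hKbpos b) with h | h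
    · rw [hBeq]; exact h
    · exfalso
      have hpsdKb : Kb.PosSemidef := KF_psd hKbsym hKbpos
      have hz : Kb *ᵥ b = 0 := by
        have : star b ⬝ᵥ Kb *ᵥ b = 0 := by simpa using h.symm
        exact (hpsdKb.dotProduct_mulVec_zero_iff b).mp this
      rw [hKbb] at hz
      exact hYb hz
  constructor
  · have : Yc ⬝ᵥ (Kc⁻¹ *ᵥ Yc) / (Yb ⬝ᵥ (Kb⁻¹ *ᵥ Yb)) ≤ 1 :=
      (div_le_one hBpos).mpr key
    linarith
  · have : 0 ≤ Yc ⬝ᵥ (Kc⁻¹ *ᵥ Yc) / (Yb ⬝ᵥ (Kb⁻¹ *ᵥ Yb)) :=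
      div_nonneg hApos hBpos.le
    linarith
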